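/- For all u, v ∈ ℝ³, setting u₀ = √(1+|u|²), v₀ = √(1+|v|²), s = 2(u₀v₀ - u·v + 1), and g = √(s-4), one has √(|u-v|² + |u×v|²)/√(u₀v₀) ≤ g ≤ |u-v|. -/

import Mathlib

open scoped RealInnerProductSpace

noncomputable def energy (v : EuclideanSpace ℝ (Fin 3)) : ℝ := Real.sqrt (1 + ‖v‖ ^ 2)

noncomputable def relMom (u v : EuclideanSpace ℝ (Fin 3)) : ℝ :=
  Real.sqrt (2 * (energy u * energy v - ⟪u, v⟫ + 1) - 4)

noncomputable def cross3 (u v : EuclideanSpace ℝ (Fin 3)) : EuclideanSpace ℝ (Fin 3) :=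
  (WithLp.equiv 2 (Fin 3 → ℝ)).symm
    ![u 1 * v 2 - u 2 * v 1, u 2 * v 0 - u 0 * v 2, u 0 * v 1 - u 1 * v 0]

lemma inner_euc3 (u v : EuclideanSpace ℝ (Fin 3)) :
    ⟪u, v⟫ = u 0 * v 0 + u 1 * v 1 + u 2 * v 2 := by
  simp [PiLp.inner_apply, Fin.sum_univ_three, mul_comm]

lemma norm_sq_euc3 (u : EuclideanSpace ℝ (Fin 3)) :
    ‖u‖ ^ 2 = u 0 ^ 2 + u 1 ^ 2 + u 2 ^ 2 := by
  rw [← real_inner_self_eq_norm_sq, inner_euc3]; ring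

lemma cross3_norm_sq (u v : EuclideanSpace ℝ (Fin 3)) :
    ‖cross3 u v‖ ^ 2 = ‖u‖ ^ 2 * ‖v‖ ^ 2 - ⟪u, v⟫ ^ 2 := by
  rw [norm_sq_euc3, norm_sq_euc3, norm_sq_euc3, inner_euc3]
  simp only [cross3, WithLp.equiv_symm_apply, PiLp.toLp_apply]
  simp [Matrix.cons_val_zero, Matrix.cons_val_one]
  ring

/-- Bounds on the relativistic relative momentum `g`:
`√(|u-v|² + |u×v|²)/√(u₀v₀) ≤ g ≤ |u-v|`. -/
theorem relMom_bounds (u v : EuclideanSpace ℝ (Fin 3)) :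
    Real.sqrt (‖u - v‖ ^ 2 + ‖cross3 u v‖ ^ 2) / Real.sqrt (energy u * energy v)
      ≤ relMom u v ∧ relMom u v ≤ ‖u - v‖ := by
  set a := ‖u‖ with ha
  set b := ‖v‖ with hb
  set c := ⟪u, v⟫ with hc
  have hsub : ‖u - v‖ ^ 2 = a ^ 2 - 2 * c + b ^ 2 := by
    rw [@norm_sub_sq_real]
  have hcross : ‖cross3 u v‖ ^ 2 = a ^ 2 * b ^ 2 - c ^ 2 := cross3_norm_sq u v
  have hcs : c ^ 2 ≤ a ^ 2 * b ^ 2 := by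
    have := sq_nonneg ‖cross3 u v‖; rw [hcross] at this; linarith
  have heu2 : energy u ^ 2 = 1 + a ^ 2 := Real.sq_sqrt (by positivity)
  have hev2 : energy v ^ 2 = 1 + b ^ 2 := Real.sq_sqrt (by positivity)
  have heu1 : 1 ≤ energy u := by
    rw [show (1:ℝ) = Real.sqrt 1 by simp]
    exact Real.sqrt_le_sqrt (by nlinarith [sq_nonneg a])
  have hev1 : 1 ≤ energy v := by
    rw [show (1:ℝ) = Real.sqrt 1 by simp]
    exact Real.sqrt_le_sqrt (by nlinarith [sq_nonneg b])
  set E := energy u * energy v with hE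
  have hE1 : 1 ≤ E := by nlinarith
  have hE2 : E ^ 2 = (1 + a ^ 2) * (1 + b ^ 2) := by
    rw [hE, mul_pow, heu2, hev2]
  have hA : 2 * (E - c + 1) - 4 = 2 * (E - c - 1) := by ring
  have h0 : 0 ≤ a ^ 2 - 2 * c + b ^ 2 + (a ^ 2 * b ^ 2 - c ^ 2) := by
    rw [← hsub, ← hcross]; positivity
  have h1 : (1 + c) ^ 2 ≤ E ^ 2 := by rw [hE2]; nlinarith
  have hEc : 1 + c ≤ E := by
    calc 1 + c ≤ |1 + c| := le_abs_self _
      _ = Real.sqrt ((1 + c) ^ 2) := (Real.sqrt_sq_eq_abs _).symm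
      _ ≤ Real.sqrt (E ^ 2) := Real.sqrt_le_sqrt h1
      _ = E := Real.sqrt_sq (by linarith)
  have hAnn : 0 ≤ 2 * (E - c - 1) := by linarith
  have hg : relMom u v = Real.sqrt (2 * (E - c - 1)) := by
    rw [relMom, ← hc, ← hE, hA]
  constructor
  · -- lower bound
    have hX : ‖u - v‖ ^ 2 + ‖cross3 u v‖ ^ 2 ≤ 2 * (E - c - 1) * E := by
      rw [hsub, hcross]
      nlinarith [sq_nonneg (E - 1 - c)]
    have hEpos : (0:ℝ) < E := by linarith
    rw [hg, div_le_iff₀ (Real.sqrt_pos.mpr hEpos)]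
    rw [← Real.sqrt_mul hAnn]
    exact Real.sqrt_le_sqrt hX
  · -- upper bound
    rw [hg, show ‖u - v‖ = Real.sqrt (‖u - v‖ ^ 2) from (Real.sqrt_sq (norm_nonneg _)).symm]
    apply Real.sqrt_le_sqrt
    rw [hsub]
    nlinarith [sq_nonneg (energy u - energy v)]
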